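/- For every finite simple graph G with maximum degree Δ(G), the star b-chromatic number satisfies S_b(G) ≤ Δ(G)² + 1. -/

import Mathlib

/-!
Definitions for star colorings, star recoloring steps, the strict partial order `≺ₛ`,
star b-vertices, the star (b-)chromatic number, star degrees and related notions,
following Božović, Mesarič Štesl, Peterin,
"On star b-chromatic number of a graph".
-/

variable {V : Type*}

/-- A proper coloring which is a *star coloring*: no path on four vertices
(vertices `a-b-x-y` with the three edges `ab`, `bx`, `xy`) is bicolored,
i.e. the union of any two color classes induces a star forest. -/
def IsStarColoring (G : SimpleGraph V) (c : V → ℕ) : Prop :=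
  (∀ ⦃u w⦄, G.Adj u w → c u ≠ c w) ∧
  ∀ a b x y : V, G.Adj a b → G.Adj b x → G.Adj x y →
    a ≠ x → b ≠ y → a ≠ y → ¬(c a = c x ∧ c b = c y)

/-- The set of colors used by a coloring. -/
def colorsUsed [Fintype V] (c : V → ℕ) : Finset ℕ :=
  Finset.image c Finset.univ

/-- `c'` is obtained from `c` by a *star recoloring step*: some color class `Vᵢ`
of the star coloring `c` is completely recolored, each of its vertices receiving one
of the remaining colors of `c`, so that the result `c'` is again a star coloring
(using the colors of `c` minus `i`). We write `c' ⊲ₛ c`. -/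
def StarRecolorStep [Fintype V] (G : SimpleGraph V) (c' c : V → ℕ) : Prop :=
  IsStarColoring G c ∧ IsStarColoring G c' ∧
  ∃ i ∈ colorsUsed c,
    (∀ v, c v ≠ i → c' v = c v) ∧
    ∀ v, c v = i → c' v ≠ i ∧ c' v ∈ colorsUsed c

/-- A minimal element of the strict partial order `≺ₛ` (the transitive closure of
the star recoloring step relation `⊲ₛ`): a star coloring on which no star
recoloring step can be performed. -/
def IsStarBColoring [Fintype V] (G : SimpleGraph V) (c : V → ℕ) : Prop :=
  IsStarColoring G c ∧ ∀ c', ¬ StarRecolorStep G c' c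

/-- The *star b-chromatic number* `Sᵦ(G)`: the maximum number of colors used by a
minimal element of `≺ₛ`. -/
noncomputable def starBChromaticNumber [Fintype V] (G : SimpleGraph V) : ℕ :=
  sSup {n | ∃ c : V → ℕ, IsStarBColoring G c ∧ (colorsUsed c).card = n}

/-- The *star chromatic number* `S(G)`: the minimum number of colors in a star coloring. -/
noncomputable def starChromaticNumber [Fintype V] (G : SimpleGraph V) : ℕ :=
  sInf {n | ∃ c : V → ℕ, IsStarColoring G c ∧ (colorsUsed c).card = n}

/-- A color `j` is *blocked* for the vertex `v` under the star coloring `c`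
if `j` is the color of `v` itself, or recoloring `v` alone with `j` destroys
the star coloring property. -/
def ColorBlockedFor [DecidableEq V] (G : SimpleGraph V) (c : V → ℕ) (v : V) (j : ℕ) : Prop :=
  j = c v ∨ ¬ IsStarColoring G (Function.update c v j)

/-- A color of `c` which is not blocked for `v` is *available* for `v`. -/
def ColorAvailableFor [Fintype V] [DecidableEq V] (G : SimpleGraph V) (c : V → ℕ)
    (v : V) (j : ℕ) : Prop :=
  j ∈ colorsUsed c ∧ ¬ ColorBlockedFor G c v j

/-- `u-b-x-w` is an induced path on four vertices of `G`. -/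
def IsInducedP4 (G : SimpleGraph V) (u b x w : V) : Prop :=
  G.Adj u b ∧ G.Adj b x ∧ G.Adj x w ∧
  ¬ G.Adj u x ∧ ¬ G.Adj b w ∧ ¬ G.Adj u w ∧
  u ≠ x ∧ b ≠ w ∧ u ≠ w

/-- The relation `~ᵢ` on a color class: two vertices of the same color joined
by an induced path on four vertices. -/
def P4Rel (G : SimpleGraph V) (c : V → ℕ) (u w : V) : Prop :=
  c u = c w ∧ ∃ b x, IsInducedP4 G u b x w

/-- The `P₄`-system of `v`: its equivalence class under the
reflexive-transitive closure of `~ᵢ`. -/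
def P4System (G : SimpleGraph V) (c : V → ℕ) (v : V) : Set V :=
  {u | Relation.ReflTransGen (P4Rel G c) v u}

/-- An available color `j` for `v` is *blocked for the `P₄`-system of `v`* if every
recoloring of the color class of `v` (each vertex receiving an available color)
in which `v` is recolored by `j` yields a bicolored path on four vertices between
two vertices of the `P₄`-system of `v`. -/
def BlockedForP4System [Fintype V] [DecidableEq V] (G : SimpleGraph V) (c : V → ℕ)
    (v : V) (j : ℕ) : Prop :=
  ∀ c' : V → ℕ,
    (∀ u, c u ≠ c v → c' u = c u) →
    (∀ u, c u = c v → ColorAvailableFor G c u (c' u)) →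
    c' v = j →
    ∃ u w b x, u ∈ P4System G c v ∧ w ∈ P4System G c v ∧
      G.Adj u b ∧ G.Adj b x ∧ G.Adj x w ∧ u ≠ x ∧ b ≠ w ∧ u ≠ w ∧
      c' u = c' x ∧ c' b = c' w

/-- A *star b-vertex*: every available color for `v` is blocked for its `P₄`-system. -/
def IsStarBVertex [Fintype V] [DecidableEq V] (G : SimpleGraph V) (c : V → ℕ) (v : V) : Prop :=
  ∀ j, ColorAvailableFor G c v j → BlockedForP4System G c v j

/-- The *star degree* `dˢ_G(v)` of a vertex: the maximum number of colors blocked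
for `v` over all star colorings of `G`. -/
noncomputable def starDegree [Fintype V] [DecidableEq V] (G : SimpleGraph V) (v : V) : ℕ :=
  sSup {n | ∃ c : V → ℕ, IsStarColoring G c ∧
    {j | j ∈ colorsUsed c ∧ ColorBlockedFor G c v j}.ncard = n}

/-- The `mₛ`-degree of a graph: the largest `k` such that `G` has `k` vertices
of star degree at least `k - 1` (equivalently, with the vertices ordered by
non-increasing star degree, `mₛ(G) = max {i : i - 1 ≤ dˢ_G(vᵢ)}`). -/
noncomputable def msDegree [Fintype V] [DecidableEq V] (G : SimpleGraph V) : ℕ :=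
  sSup {k | ∃ s : Finset V, s.card = k ∧ ∀ v ∈ s, k - 1 ≤ starDegree G v}

/-- The maximum degree `Δ(G)` of a graph. -/
noncomputable def maxDeg (G : SimpleGraph V) : ℕ :=
  sSup {d | ∃ v : V, (G.neighborSet v).ncard = d}

/-- The *b-chromatic number* `φ(G)`: the maximum number of colors of a proper coloring
in which every color class contains a vertex whose closed neighborhood contains
all the colors. -/
noncomputable def bChromaticNumber [Fintype V] (G : SimpleGraph V) : ℕ :=
  sSup {k | ∃ c : V → ℕ, (∀ ⦃u w⦄, G.Adj u w → c u ≠ c w) ∧ (colorsUsed c).card = k ∧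
    ∀ i ∈ colorsUsed c, ∃ v, c v = i ∧
      ∀ j ∈ colorsUsed c, ∃ u, (u = v ∨ G.Adj v u) ∧ c u = j}

/-- The join `G ∨ H` of two simple graphs: disjoint union of `G` and `H`
together with all edges between the two vertex sets. -/
def graphJoin {α β : Type*} (G : SimpleGraph α) (H : SimpleGraph β) :
    SimpleGraph (α ⊕ β) where
  Adj x y :=
    (∃ a b, x = Sum.inl a ∧ y = Sum.inl b ∧ G.Adj a b) ∨
    (∃ a b, x = Sum.inr a ∧ y = Sum.inr b ∧ H.Adj a b) ∨
    (∃ a b, x = Sum.inl a ∧ y = Sum.inr b) ∨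
    (∃ a b, x = Sum.inr a ∧ y = Sum.inl b)
  symm := by
    refine ⟨?_⟩
    rintro x y (⟨a,b,rfl,rfl,h⟩|⟨a,b,rfl,rfl,h⟩|⟨a,b,rfl,rfl⟩|⟨a,b,rfl,rfl⟩)
    · exact Or.inl ⟨b, a, rfl, rfl, h.symm⟩
    · exact Or.inr (Or.inl ⟨b, a, rfl, rfl, h.symm⟩)
    · exact Or.inr (Or.inr (Or.inr ⟨b, a, rfl, rfl⟩))
    · exact Or.inr (Or.inr (Or.inl ⟨b, a, rfl, rfl⟩))
  loopless := by
    refine ⟨?_⟩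
    rintro x (⟨a,b,h1,h2,h⟩|⟨a,b,h1,h2,h⟩|⟨a,b,h1,h2⟩|⟨a,b,h1,h2⟩) <;> subst h1 <;>
      simp_all [SimpleGraph.irrefl]

/-- `N₂(v)`: vertices at distance exactly two from `v`. -/
def distTwoSet (G : SimpleGraph V) (v : V) : Set V := {u | G.dist v u = 2}

/-- `N₃(v)`: vertices at distance exactly three from `v`. -/
def distThreeSet (G : SimpleGraph V) (v : V) : Set V := {u | G.dist v u = 3}

/-- `X(v)`: vertices at distance two from `v` with no neighbor at distance three from `v`. -/
def XSet (G : SimpleGraph V) (v : V) : Set V :=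
  {u | u ∈ distTwoSet G v ∧ ∀ w ∈ distThreeSet G v, ¬ G.Adj u w}

/-- `Y(v)`: vertices at distance two from `v` having a neighbor at distance three from `v`. -/
def YSet (G : SimpleGraph V) (v : V) : Set V := distTwoSet G v \ XSet G v

lemma deg_le_maxDeg' [Fintype V] (G : SimpleGraph V) [DecidableRel G.Adj] (v : V) :
    (G.neighborFinset v).card ≤ maxDeg G := by
  have h1 : (G.neighborSet v).ncard = (G.neighborFinset v).card := by
    rw [SimpleGraph.neighborFinset_def, Set.ncard_eq_toFinset_card']
  rw [← h1]
  refine le_csSup ⟨Fintype.card V, ?_⟩ ⟨v, rfl⟩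
  rintro d ⟨u, rfl⟩
  calc (G.neighborSet u).ncard ≤ (Set.univ : Set V).ncard :=
        Set.ncard_le_ncard (Set.subset_univ _) Set.finite_univ
    _ = Fintype.card V := by simp [Set.ncard_univ]

lemma starBColoring_card_le [Fintype V] (G : SimpleGraph V) (c : V → ℕ)
    (hb : IsStarBColoring G c) : (colorsUsed c).card ≤ maxDeg G ^ 2 + 1 := by
  classical
  by_contra hlt
  push_neg at hlt
  set D := maxDeg G with hD
  -- pick a color i
  obtain ⟨i, hi⟩ := Finset.card_pos.mp (show 0 < (colorsUsed c).card by omega)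
  have hcs := hb.1
  -- forbidden set for each vertex : colors within distance 2
  set F : V → Finset ℕ := fun v => insert (c v)
    ((G.neighborFinset v).image c ∪
      (G.neighborFinset v).biUnion fun m => ((G.neighborFinset m).erase v).image c) with hFdef
  have hFself : ∀ v, c v ∈ F v := fun v => Finset.mem_insert_self _ _
  have hF1 : ∀ v w, G.Adj v w → c w ∈ F v := by
    intro v w hvw
    refine Finset.mem_insert_of_mem (Finset.mem_union_left _ ?_)
    exact Finset.mem_image_of_mem c (by simpa using hvw)
  have hF2 : ∀ v m w, G.Adj v m → G.Adj m w → w ≠ v → c w ∈ F v := by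
    intro v m w hvm hmw hwv
    refine Finset.mem_insert_of_mem (Finset.mem_union_right _ ?_)
    refine Finset.mem_biUnion.mpr ⟨m, by simpa using hvm, ?_⟩
    exact Finset.mem_image_of_mem c (Finset.mem_erase.mpr ⟨hwv, by simpa using hmw⟩)
  -- cardinality bound for F
  have hFcard : ∀ v, (F v).card ≤ D ^ 2 + 1 := by
    intro v
    have hdeg : ∀ u, (G.neighborFinset u).card ≤ D := fun u => deg_le_maxDeg' G u
    have h1 : ((G.neighborFinset v).image c).card ≤ D :=
      (Finset.card_image_le).trans (hdeg v)
    have h2 : ((G.neighborFinset v).biUnion fun m =>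
        ((G.neighborFinset m).erase v).image c).card ≤ D * (D - 1) := by
      refine (Finset.card_biUnion_le).trans ?_
      calc (∑ m ∈ G.neighborFinset v, (((G.neighborFinset m).erase v).image c).card)
          ≤ ∑ _m ∈ G.neighborFinset v, (D - 1) := by
            refine Finset.sum_le_sum fun m hm => ?_
            refine Finset.card_image_le.trans ?_
            have hv : v ∈ G.neighborFinset m := by
              simp only [SimpleGraph.mem_neighborFinset] at hm ⊢
              exact hm.symm
            rw [Finset.card_erase_of_mem hv]
            exact Nat.sub_le_sub_right (hdeg m) 1
        _ = (G.neighborFinset v).card * (D - 1) := by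
            rw [Finset.sum_const, smul_eq_mul]
        _ ≤ D * (D - 1) := Nat.mul_le_mul_right _ (hdeg v)
    calc (F v).card ≤ ((G.neighborFinset v).image c ∪
          (G.neighborFinset v).biUnion fun m => ((G.neighborFinset m).erase v).image c).card + 1 :=
          Finset.card_insert_le _ _
      _ ≤ (((G.neighborFinset v).image c).card +
            ((G.neighborFinset v).biUnion fun m =>
              ((G.neighborFinset m).erase v).image c).card) + 1 := by
          exact Nat.add_le_add_right (Finset.card_union_le _ _) 1
      _ ≤ (D + D * (D - 1)) + 1 := by omega
      _ ≤ D ^ 2 + 1 := by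
          have h : D * (D - 1) + D ≤ D ^ 2 := by
            rcases D with _ | d
            · simp
            · simp only [Nat.add_sub_cancel]
              nlinarith
          omega
  -- each vertex of the class of i has an available color
  have hne : ∀ v, c v = i → (colorsUsed c \ F v).Nonempty := by
    intro v _
    rw [← Finset.card_pos]
    have h1 := hFcard v
    have h2 : (colorsUsed c).card ≤ (F v).card + (colorsUsed c \ F v).card := by
      calc (colorsUsed c).card ≤ (F v ∪ (colorsUsed c \ F v)).card :=
            Finset.card_le_card (fun x hx => by
              by_cases hxF : x ∈ F v
              · exact Finset.mem_union_left _ hxF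
              · exact Finset.mem_union_right _ (Finset.mem_sdiff.mpr ⟨hx, hxF⟩))
        _ ≤ (F v).card + (colorsUsed c \ F v).card := Finset.card_union_le _ _
    omega
  -- the recoloring
  set c' : V → ℕ := fun v => if h : c v = i then (hne v h).choose else c v with hc'def
  have hc'mem : ∀ v, c v = i → c' v ∈ colorsUsed c \ F v := by
    intro v h
    simp only [hc'def, dif_pos h]
    exact (hne v h).choose_spec
  have hkeep : ∀ v, c v ≠ i → c' v = c v := by
    intro v h; simp only [hc'def, dif_neg h]
  have hnotF : ∀ v, c v = i → c' v ∉ F v := fun v h => (Finset.mem_sdiff.mp (hc'mem v h)).2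
  have hused : ∀ v, c v = i → c' v ∈ colorsUsed c := fun v h =>
    (Finset.mem_sdiff.mp (hc'mem v h)).1
  have hneqi : ∀ v, c v = i → c' v ≠ i := by
    intro v h heq
    exact hnotF v h (heq ▸ h ▸ hFself v)
  -- c' is proper
  have hprop : ∀ ⦃u w⦄, G.Adj u w → c' u ≠ c' w := by
    intro u w huw
    by_cases hu : c u = i <;> by_cases hw : c w = i
    · exact absurd (hu.trans hw.symm) (hcs.1 huw)
    · rw [hkeep w hw]; exact fun h => hnotF u hu (h ▸ hF1 u w huw)
    · rw [hkeep u hu]; intro h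
      exact hnotF w hw (h ▸ hF1 w u huw.symm)
    · rw [hkeep u hu, hkeep w hw]; exact hcs.1 huw
  -- c' is a star coloring
  have hstar : IsStarColoring G c' := by
    refine ⟨hprop, ?_⟩
    intro a b x y hab hbx hxy hax hby hay ⟨heq1, heq2⟩
    by_cases ha : c a = i
    · have hb : c b ≠ i := fun h => hcs.1 hab (ha.trans h.symm)
      by_cases hx : c x = i
      · -- old bicolored P4
        have hy : c y ≠ i := fun h => hcs.1 hxy (hx.trans h.symm)
        refine hcs.2 a b x y hab hbx hxy hax hby hay ⟨ha.trans hx.symm, ?_⟩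
        rw [← hkeep b hb, ← hkeep y hy]; exact heq2
      · have : c' a = c x := by rw [heq1, hkeep x hx]
        exact hnotF a ha (this ▸ hF2 a b x hab hbx hax.symm)
    · by_cases hx : c x = i
      · have : c' x = c a := by rw [← heq1, hkeep a ha]
        exact hnotF x hx (this ▸ hF2 x b a hbx.symm hab.symm hax)
      · have heqax : c a = c x := by rw [← hkeep a ha, ← hkeep x hx]; exact heq1
        by_cases hcb : c b = i
        · by_cases hy : c y = i
          · exact hcs.2 a b x y hab hbx hxy hax hby hay ⟨heqax, hcb.trans hy.symm⟩
          · have : c' b = c y := by rw [heq2, hkeep y hy]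
            exact hnotF b hcb (this ▸ hF2 b x y hbx hxy hby.symm)
        · by_cases hy : c y = i
          · have : c' y = c b := by rw [← heq2, hkeep b hcb]
            exact hnotF y hy (this ▸ hF2 y x b hxy.symm hbx.symm hby)
          · refine hcs.2 a b x y hab hbx hxy hax hby hay ⟨heqax, ?_⟩
            rw [← hkeep b hcb, ← hkeep y hy]; exact heq2
  -- contradiction with minimality
  exact hb.2 c' ⟨hcs, hstar, i, hi, hkeep, fun v hv => ⟨hneqi v hv, hused v hv⟩⟩

/-- **Corollary.** For every finite simple graph `G`, `Sᵦ(G) ≤ Δ(G)² + 1`. -/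
theorem starBChromaticNumber_le_maxDeg_sq_add_one [Fintype V] (G : SimpleGraph V) :
    starBChromaticNumber G ≤ maxDeg G ^ 2 + 1 := by
  refine csSup_le' ?_
  rintro n ⟨c, hb, rfl⟩
  exact starBColoring_card_le G c hb
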